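/- Let x_1,…,x_n ∈ [0,1]^d with d ≥ 2 and n ≥ 2e·d², and set κ = 1 − 1/d. If for some coordinate j there is no point y among x_1,…,x_n with y^{(j)} > κ and y^{(k)} ≤ κ for all k ≠ j, then D_n^*(x_1,…,x_n) ≥ d/n. -/

import Mathlib

open scoped Classical

/-- The closed anchored axis-parallel box `[0,a_1] × ⋯ × [0,a_d]`. -/
def anchoredBox (d : ℕ) (a : Fin d → ℝ) : Set (Fin d → ℝ) :=
  {y | ∀ j, 0 ≤ y j ∧ y j ≤ a j}

/-- The star-discrepancy of the points `x 1, …, x n` in `[0,1]^d`. -/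
noncomputable def starD (d n : ℕ) (x : Fin n → Fin d → ℝ) : ℝ :=
  sSup {t : ℝ | ∃ a : Fin d → ℝ, (∀ j, a j ∈ Set.Icc (0:ℝ) 1) ∧
    t = |((Finset.univ.filter (fun k => x k ∈ anchoredBox d a)).card : ℝ) / n - ∏ j, a j|}

/-- The number of distinct subsets of `{x 1, …, x n}` cut out by anchored boxes. -/
noncomputable def interCount (d n : ℕ) (x : Fin n → Fin d → ℝ) : ℕ :=
  Set.ncard {P : Set (Fin d → ℝ) | ∃ a : Fin d → ℝ,
    (∀ j, a j ∈ Set.Icc (0:ℝ) 1) ∧ P = anchoredBox d a ∩ Set.range x}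

/-- The number of points lying on the right upper boundary of the box `[0,a]`. -/
noncomputable def boundaryCount (d n : ℕ) (x : Fin n → Fin d → ℝ) (a : Fin d → ℝ) : ℕ :=
  (Finset.univ.filter (fun k => x k ∈ anchoredBox d a ∧ ∃ j, x k j = a j)).card

theorem missing_face_point (d n : ℕ) (hd : 2 ≤ d) (hn : 2 * Real.exp 1 * d ^ 2 ≤ n)
    (x : Fin n → Fin d → ℝ) (hx : ∀ k j, x k j ∈ Set.Icc (0:ℝ) 1)
    (j : Fin d)
    (hno : ¬ ∃ k : Fin n, x k j > 1 - 1/(d:ℝ) ∧ ∀ i : Fin d, i ≠ j → x k i ≤ 1 - 1/(d:ℝ)) :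
    starD d n x ≥ (d : ℝ) / n := by
  have hd1 : (1:ℝ) ≤ (d:ℝ) - 1 := by
    have : (2:ℝ) ≤ (d:ℝ) := by exact_mod_cast hd
    linarith
  have hdpos : (0:ℝ) < (d:ℝ) := by linarith
  have hnpos : (0:ℝ) < (n:ℝ) := lt_of_lt_of_le (by positivity) hn
  set κ : ℝ := 1 - 1/(d:ℝ) with hκ
  have hκeq : κ = ((d:ℝ) - 1) / d := by field_simp [hκ]; rw [hκ, sub_mul, one_mul, one_div, inv_mul_cancel₀ hdpos.ne']
  have hκ0 : 0 ≤ κ := by rw [hκeq]; positivity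
  have hκ1 : κ ≤ 1 := by
    have : 0 ≤ 1/(d:ℝ) := by positivity
    simp only [hκ]; linarith
  -- the exponential bound : exp 1 * κ^(d-1) ≥ 1
  have hkey : ((d:ℝ)/((d:ℝ)-1))^(d-1) ≤ Real.exp 1 := by
    have h2 : (d:ℝ)/((d:ℝ)-1) ≤ Real.exp (1/((d:ℝ)-1)) := by
      have h1 : (d:ℝ)/((d:ℝ)-1) = 1/((d:ℝ)-1) + 1 := by field_simp; ring
      rw [h1]
      exact Real.add_one_le_exp _
    calc ((d:ℝ)/((d:ℝ)-1))^(d-1) ≤ (Real.exp (1/((d:ℝ)-1)))^(d-1) :=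
          pow_le_pow_left₀ (by positivity) h2 _
      _ = Real.exp (((d:ℕ)-1 : ℕ) * (1/((d:ℝ)-1))) := by
          rw [Real.exp_nat_mul]
      _ = Real.exp 1 := by
          have hc : (((d:ℕ)-1 : ℕ) : ℝ) = (d:ℝ) - 1 := by
            have : 1 ≤ d := by omega
            push_cast [this]; ring
          rw [hc]
          congr 1
          field_simp
  have hexp : 1 ≤ Real.exp 1 * κ ^ (d-1) := by
    have hmul : κ ^ (d-1) * ((d:ℝ)/((d:ℝ)-1))^(d-1) = 1 := by
      rw [← mul_pow, hκeq]
      have : ((d:ℝ) - 1) / d * ((d:ℝ)/((d:ℝ)-1)) = 1 := by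
        field_simp
      rw [this, one_pow]
    have hκpow : 0 ≤ κ ^ (d-1) := by positivity
    calc (1:ℝ) = ((d:ℝ)/((d:ℝ)-1))^(d-1) * κ ^ (d-1) := by rw [mul_comm, hmul]
      _ ≤ Real.exp 1 * κ ^ (d-1) := by
          exact mul_le_mul_of_nonneg_right hkey hκpow
  -- the two boxes
  set aA : Fin d → ℝ := fun i => if i = j then 1 else κ with haA
  set aB : Fin d → ℝ := fun _ => κ with haB
  have haArange : ∀ i, aA i ∈ Set.Icc (0:ℝ) 1 := by
    intro i; simp only [haA]
    by_cases h : i = j <;> simp [h, hκ0, hκ1]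
  have haBrange : ∀ i, aB i ∈ Set.Icc (0:ℝ) 1 := fun i => ⟨hκ0, hκ1⟩
  -- same points in both boxes
  have hsame : ∀ k : Fin n, x k ∈ anchoredBox d aA ↔ x k ∈ anchoredBox d aB := by
    intro k
    constructor
    · intro hk
      intro i
      refine ⟨(hk i).1, ?_⟩
      simp only [haB]
      by_cases h : i = j
      · subst h
        by_contra hgt
        push_neg at hgt
        exact hno ⟨k, hgt, fun i' hi' => by
          have := (hk i').2
          simpa [haA, hi'] using this⟩
      · have := (hk i).2
        simpa [haA, h] using this
    · intro hk i
      refine ⟨(hk i).1, ?_⟩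
      have := (hk i).2
      simp only [haB] at this
      simp only [haA]
      by_cases h : i = j
      · rw [if_pos h]; exact (hx k i).2
      · rw [if_neg h]; exact this
  have hcard : (Finset.univ.filter (fun k => x k ∈ anchoredBox d aA)).card
      = (Finset.univ.filter (fun k => x k ∈ anchoredBox d aB)).card := by
    congr 1
    apply Finset.filter_congr
    intro k _
    simp [hsame k]
  -- products
  have hprodA : ∏ i, aA i = κ ^ (d-1) := by
    rw [← Finset.mul_prod_erase Finset.univ aA (Finset.mem_univ j)]
    have h1 : aA j = 1 := by simp [haA]
    have h2 : ∏ i ∈ Finset.univ.erase j, aA i = κ ^ (d-1) := by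
      rw [Finset.prod_congr rfl (fun i hi => ?_), Finset.prod_const,
        Finset.card_erase_of_mem (Finset.mem_univ j), Finset.card_univ, Fintype.card_fin]
      · simp [haA, Finset.ne_of_mem_erase hi]
    rw [h1, h2, one_mul]
  have hprodB : ∏ i, aB i = κ ^ d := by
    simp [haB, Finset.prod_const, Finset.card_univ]
  -- the set and its bound
  set S : Set ℝ := {t : ℝ | ∃ a : Fin d → ℝ, (∀ j, a j ∈ Set.Icc (0:ℝ) 1) ∧
    t = |((Finset.univ.filter (fun k => x k ∈ anchoredBox d a)).card : ℝ) / n - ∏ j, a j|}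
    with hS
  have hbdd : BddAbove S := by
    refine ⟨1, fun t ht => ?_⟩
    obtain ⟨a, ha, rfl⟩ := ht
    have hc1 : ((Finset.univ.filter (fun k => x k ∈ anchoredBox d a)).card : ℝ) ≤ n := by
      have h := Finset.card_filter_le Finset.univ (fun k => x k ∈ anchoredBox d a)
      rw [Finset.card_univ, Fintype.card_fin] at h
      exact_mod_cast h
    have hc0 : (0:ℝ) ≤ ((Finset.univ.filter (fun k => x k ∈ anchoredBox d a)).card : ℝ) := by
      positivity
    have hp0 : (0:ℝ) ≤ ∏ i, a i := Finset.prod_nonneg (fun i _ => (ha i).1)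
    have hp1 : ∏ i, a i ≤ 1 := Finset.prod_le_one (fun i _ => (ha i).1) (fun i _ => (ha i).2)
    have hq : ((Finset.univ.filter (fun k => x k ∈ anchoredBox d a)).card : ℝ) / n ≤ 1 := by
      rw [div_le_one hnpos]; exact hc1
    have hq0 : (0:ℝ) ≤ ((Finset.univ.filter (fun k => x k ∈ anchoredBox d a)).card : ℝ) / n := by
      positivity
    rw [abs_le]
    constructor <;> linarith
  set N : ℝ := ((Finset.univ.filter (fun k => x k ∈ anchoredBox d aA)).card : ℝ) with hN
  have htA : |N / n - κ ^ (d-1)| ∈ S := ⟨aA, haArange, by rw [hprodA]⟩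
  have htB : |N / n - κ ^ d| ∈ S := ⟨aB, haBrange, by rw [hprodB, hN, hcard]⟩
  -- the gap
  have hgap : κ ^ (d-1) - κ ^ d = κ ^ (d-1) / d := by
    have hdd : d = (d - 1) + 1 := by omega
    calc κ ^ (d-1) - κ ^ d = κ ^ (d-1) - κ ^ (d-1) * κ := by
          nth_rewrite 2 [hdd]; rw [pow_succ]
      _ = κ ^ (d-1) * (1 - κ) := by ring
      _ = κ ^ (d-1) / d := by rw [hκ]; field_simp; ring
  have hgap2 : 2 * ((d:ℝ)/n) ≤ κ ^ (d-1) - κ ^ d := by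
    rw [hgap]
    have hκpow : (0:ℝ) ≤ κ ^ (d-1) := by positivity
    have key : (2*(d:ℝ))/n ≤ κ ^ (d-1)/d := by
      rw [div_le_div_iff₀ hnpos hdpos]
      nlinarith [mul_le_mul_of_nonneg_left hn hκpow,
        mul_le_mul_of_nonneg_left hexp (by positivity : (0:ℝ) ≤ 2*(d:ℝ)^2)]
    calc 2 * ((d:ℝ)/n) = (2*(d:ℝ))/n := by ring
      _ ≤ κ ^ (d-1)/d := key
  have h1 : κ ^ (d-1) - N/n ≤ |N / n - κ ^ (d-1)| := by
    rw [abs_sub_comm]; exact le_abs_self _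
  have h2 : N/n - κ ^ d ≤ |N / n - κ ^ d| := le_abs_self _
  have hmax : (d:ℝ)/n ≤ |N / n - κ ^ (d-1)| ∨ (d:ℝ)/n ≤ |N / n - κ ^ d| := by
    by_contra hcon
    push_neg at hcon
    linarith [hcon.1, hcon.2]
  rcases hmax with h | h
  · exact le_trans h (le_csSup hbdd htA)
  · exact le_trans h (le_csSup hbdd htB)
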